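/- Let X be a reflexive and strictly convex Banach space with property (H). Let A and B = A + h be proximinal parallel subsets of X with ‖h‖ = dist(A,B) = d and C = A + 2h, and suppose B is nonempty, closed and convex. Then, for each x ∈ B, there exists a function f : (0,∞) → (0,∞) with lim_{r→0} f(r) = 0 such that B₁(x,r) ⊆ B̄(x,f(r)) for all r > 0, where B₁(x,r) = {y ∈ B : d₁(x,y) ≤ r} with d₁(x,y) = inf{ρ > 0 : ‖y−(x−h)‖ ≤ d+ρ and ‖y−(x+h)‖ ≤ d+ρ}, and B̄(x,s) is the closed norm ball of center x and radius s. -/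

import Mathlib

open Filter Metric

/-- The distance between two sets: `inf {d(x,y) : x ∈ A, y ∈ B}`. -/
noncomputable def setDist {X : Type*} [PseudoMetricSpace X] (A B : Set X) : ℝ :=
  sInf (Set.image2 dist A B)

/-- `(A,B)` is a sharp proximinal pair. -/
def SharpProximinalPair {X : Type*} [NormedAddCommGroup X] (A B : Set X) : Prop :=
  ∀ x ∈ A, ∀ y ∈ B, ∃! p : X × X,
    p.1 ∈ A ∧ p.2 ∈ B ∧ dist x p.2 = setDist A B ∧ dist p.1 y = setDist A B

/-- `A` and `B` are proximinal parallel sets, with `B = A + h` and `‖h‖ = dist(A,B)`. -/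
def ProximinalParallel {X : Type*} [NormedAddCommGroup X] (A B : Set X) (h : X) : Prop :=
  SharpProximinalPair A B ∧ B = (fun a => a + h) '' A ∧ ‖h‖ = setDist A B

/-- The semimetric `d₁(x,y) = inf {r > 0 : ‖y - (x - h)‖ ≤ d + r and ‖y - (x + h)‖ ≤ d + r}`. -/
noncomputable def semiD1 {X : Type*} [NormedAddCommGroup X] (h : X) (d : ℝ) (x y : X) : ℝ :=
  sInf {r : ℝ | 0 < r ∧ ‖y - (x - h)‖ ≤ d + r ∧ ‖y - (x + h)‖ ≤ d + r}

/-- The sequence `x` converges weakly to `z`. -/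
def WeakTendsto {X : Type*} [NormedAddCommGroup X] [NormedSpace ℝ X]
    (x : ℕ → X) (z : X) : Prop :=
  ∀ f : X →L[ℝ] ℝ, Tendsto (fun n => f (x n)) atTop (nhds (f z))

/-- `X` is reflexive: the canonical embedding into the double dual is surjective. -/
def ReflexiveSpace (X : Type*) [NormedAddCommGroup X] [NormedSpace ℝ X] : Prop :=
  Function.Surjective (NormedSpace.inclusionInDoubleDual ℝ X)

/-- Property (H): for sequences on the unit sphere, weak and norm convergence coincide. -/
def PropertyH (X : Type*) [NormedAddCommGroup X] [NormedSpace ℝ X] : Prop :=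
  ∀ (x : ℕ → X) (z : X), (∀ n, ‖x n‖ = 1) →
    (WeakTendsto x z ↔ Tendsto x atTop (nhds z))

section AuxLemmas

variable {X : Type*} [NormedAddCommGroup X] [NormedSpace ℝ X]

/-- Strict convexity: the only point of both closed balls `B(x-h,d)`, `B(x+h,d)`
with `‖h‖ = d` is `x` itself. -/
lemma aux_strict_eq [StrictConvexSpace ℝ X] {h z x : X} {d : ℝ} (hh : ‖h‖ = d)
    (h1 : ‖z - (x - h)‖ ≤ d) (h2 : ‖z - (x + h)‖ ≤ d) : z = x := by
  set u := z - (x - h) with hu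
  set w := x + h - z with hw
  have hsum : ‖u + w‖ = d + d := by
    have huw : u + w = h + h := by rw [hu, hw]; abel
    rw [huw]
    calc ‖h + h‖ = ‖(2:ℝ) • h‖ := by rw [two_smul]
    _ = 2 * ‖h‖ := by rw [norm_smul]; norm_num
    _ = d + d := by rw [hh]; ring
  have hwle : ‖w‖ ≤ d := by rw [hw, ← norm_neg]; simpa [neg_sub] using h2
  have htri : ‖u + w‖ ≤ ‖u‖ + ‖w‖ := norm_add_le u w
  have hun : ‖u‖ = d := by linarith [hsum, h1, hwle, htri]
  have hwn : ‖w‖ = d := by linarith [hsum, h1, hwle, htri]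
  have heq : u = w := by
    refine eq_of_norm_eq_of_norm_add_eq (by rw [hun, hwn]) ?_
    rw [hsum, hun, hwn]
  have h2z : (2:ℝ) • z = (2:ℝ) • x := by
    have h0 : u - w = 0 := by rw [heq, sub_self]
    have hd2 : (2:ℝ) • z - (2:ℝ) • x = u - w := by rw [hu, hw, two_smul, two_smul]; abel
    rw [h0] at hd2
    exact sub_eq_zero.mp hd2
  exact smul_right_injective X (two_ne_zero) h2z

/-- `semiD1 h d x y ≤ r` implies the two norm conditions at radius `r`. -/
lemma aux_semiD1_le {h x y : X} {d r : ℝ}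
    (hle : sInf {ρ : ℝ | 0 < ρ ∧ ‖y - (x - h)‖ ≤ d + ρ ∧ ‖y - (x + h)‖ ≤ d + ρ} ≤ r) :
    ‖y - (x - h)‖ ≤ d + r ∧ ‖y - (x + h)‖ ≤ d + r := by
  set s := {ρ : ℝ | 0 < ρ ∧ ‖y - (x - h)‖ ≤ d + ρ ∧ ‖y - (x + h)‖ ≤ d + ρ} with hs
  have hne : s.Nonempty := by
    refine ⟨‖y - (x - h)‖ + ‖y - (x + h)‖ + |d| + 1, by positivity, ?_, ?_⟩ <;>
      · have := abs_nonneg d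
        have := neg_abs_le d
        have := norm_nonneg (y - (x - h))
        have := norm_nonneg (y - (x + h))
        linarith
  have hbdd : BddBelow s := ⟨0, fun t ht => le_of_lt ht.1⟩
  have key : ∀ ρ, r < ρ → ‖y - (x - h)‖ ≤ d + ρ ∧ ‖y - (x + h)‖ ≤ d + ρ := by
    intro ρ hρ
    have hlt : sInf s < ρ := lt_of_le_of_lt hle hρ
    obtain ⟨t, hts, htρ⟩ := (csInf_lt_iff hbdd hne).mp hlt
    exact ⟨hts.2.1.trans (by linarith), hts.2.2.trans (by linarith)⟩
  constructor <;>
  · refine le_of_forall_pos_le_add fun ε hε => ?_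
    have hk := key (r + ε) (by linarith)
    first
      | linarith [hk.1]
      | linarith [hk.2]

/-- In a compact set, a sequence with a unique cluster point converges to it. -/
lemma aux_tendsto_of_unique {α : Type*} [TopologicalSpace α] {K : Set α} (hK : IsCompact K)
    {u : ℕ → α} (hu : ∀ n, u n ∈ K) {z : α}
    (huniq : ∀ φ, ClusterPt φ (Filter.map u atTop) → φ = z) :
    Tendsto u atTop (nhds z) := by
  by_contra hcon
  obtain ⟨s, hs, hfreq⟩ := not_tendsto_iff_exists_frequently_notMem.mp hcon
  have hne : (atTop ⊓ Filter.principal (u ⁻¹' sᶜ)).NeBot :=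
    Filter.frequently_iff_neBot.mp hfreq
  set F := Filter.map u (atTop ⊓ Filter.principal (u ⁻¹' sᶜ)) with hF
  have hFne : F.NeBot := hne.map u
  have hFle : F ≤ Filter.principal K := by
    refine le_trans (Filter.map_mono inf_le_left) ?_
    rw [Filter.map_le_iff_le_comap, Filter.comap_principal]
    exact Filter.le_principal_iff.mpr (Filter.univ_mem' hu)
  obtain ⟨φ, _, hφ⟩ := hK.exists_clusterPt hFle
  have hφz : φ = z := huniq φ (hφ.mono (Filter.map_mono inf_le_left))
  have hφc : φ ∈ closure sᶜ := by
    have h1 : ClusterPt φ (Filter.principal sᶜ) := by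
      refine hφ.mono ?_
      refine le_trans (Filter.map_mono inf_le_right) ?_
      rw [Filter.map_le_iff_le_comap, Filter.comap_principal]
    rwa [← mem_closure_iff_clusterPt] at h1
  rw [closure_compl] at hφc
  exact hφc (hφz ▸ mem_interior_iff_mem_nhds.mpr hs)

/-- The canonical map into the double dual, viewed as taking values in the weak-star dual. -/
noncomputable def auxPsi (X : Type*) [NormedAddCommGroup X] [NormedSpace ℝ X] :
    X → WeakDual ℝ (StrongDual ℝ X) :=
  fun z => StrongDual.toWeakDual (NormedSpace.inclusionInDoubleDual ℝ X z)

lemma auxPsi_apply (z : X) (f : StrongDual ℝ X) : auxPsi X z f = f z := rfl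

lemma auxPsi_toNormed (z : X) :
    WeakDual.toStrongDual (auxPsi X z) = NormedSpace.inclusionInDoubleDual ℝ X z := rfl

lemma auxPsi_norm (z : X) : ‖WeakDual.toStrongDual (auxPsi X z)‖ = ‖z‖ :=
  (NormedSpace.inclusionInDoubleDualLi ℝ).norm_map z

lemma aux_J_norm (z : X) : ‖NormedSpace.inclusionInDoubleDual ℝ X z‖ = ‖z‖ :=
  (NormedSpace.inclusionInDoubleDualLi ℝ).norm_map z

/-- The image of a closed convex set under the double-dual embedding is weak-star
closed, provided the space is reflexive. -/
lemma aux_isClosed_image (hrefl : Function.Surjective (NormedSpace.inclusionInDoubleDual ℝ X))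
    {B : Set X} (hBclosed : IsClosed B) (hBconv : Convex ℝ B) :
    IsClosed (auxPsi X '' B) := by
  rw [← isOpen_compl_iff, isOpen_iff_forall_mem_open]
  intro φ hφ
  obtain ⟨y₀, hy₀⟩ := hrefl (WeakDual.toStrongDual φ)
  have hφy : φ = auxPsi X y₀ := by
    unfold auxPsi
    rw [hy₀]
    rfl
  have hy₀B : y₀ ∉ B := by
    intro hmem
    exact hφ ⟨y₀, hmem, hφy.symm⟩
  obtain ⟨f, v, hfb, hfy⟩ := geometric_hahn_banach_closed_point hBconv hBclosed hy₀B
  refine ⟨(fun ψ : WeakDual ℝ (StrongDual ℝ X) => ψ f) ⁻¹' Set.Ioi v, ?_, ?_, ?_⟩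
  · rintro ψ hψ ⟨b, hb, rfl⟩
    have hlt : (v:ℝ) < f b := by simpa [auxPsi_apply] using hψ
    exact absurd (hfb b hb) (not_lt.mpr hlt.le)
  · exact (WeakDual.eval_continuous f).isOpen_preimage _ isOpen_Ioi
  · simpa [hφy, auxPsi_apply] using hfy

/-- The core analytic fact: points of `B` that are within `d + δ` of both `x - h` and
`x + h` are uniformly close to `x`, for small `δ`. -/
lemma aux_core [StrictConvexSpace ℝ X]
    (hrefl : ReflexiveSpace X) (hH : PropertyH X) {B : Set X} (hBclosed : IsClosed B)
    (hBconv : Convex ℝ B) {h x : X} {d : ℝ} (hhd : ‖h‖ = d) {ε : ℝ} (hε : 0 < ε) :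
    ∃ δ > 0, ∀ y ∈ B, ‖y - (x - h)‖ ≤ d + δ → ‖y - (x + h)‖ ≤ d + δ → ‖y - x‖ ≤ ε := by
  by_contra hcon
  push_neg at hcon
  have hd0 : 0 ≤ d := hhd ▸ norm_nonneg h
  rcases eq_or_lt_of_le hd0 with hd0' | hdpos
  · obtain ⟨y, hyB, h1, h2, h3⟩ := hcon ε hε
    have hh0 : h = 0 := norm_eq_zero.mp (by rw [hhd, ← hd0'])
    rw [hh0, sub_zero, ← hd0', zero_add] at h1
    linarith
  · -- the sequence of bad points
    set e : ℕ → ℝ := fun n => min ((n:ℝ)+1)⁻¹ (d/2) with he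
    have hepos : ∀ n, 0 < e n := fun n => lt_min (by positivity) (by linarith)
    have he1 : ∀ n, e n ≤ ((n:ℝ)+1)⁻¹ := fun n => min_le_left _ _
    have hed : ∀ n, e n ≤ d/2 := fun n => min_le_right _ _
    have he0 : Tendsto e atTop (nhds 0) := by
      have h1 : Tendsto (fun n : ℕ => ((n:ℝ)+1)⁻¹) atTop (nhds 0) := by
        simpa [one_div] using tendsto_one_div_add_atTop_nhds_zero_nat (𝕜 := ℝ)
      exact tendsto_of_tendsto_of_tendsto_of_le_of_le tendsto_const_nhds h1
        (fun n => (hepos n).le) he1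
    have hanti : ∀ m n : ℕ, n ≤ m → e m ≤ e n := by
      intro m n hnm
      apply min_le_min _ le_rfl
      apply inv_anti₀ (by positivity)
      have : (n:ℝ) ≤ m := Nat.cast_le.mpr hnm
      linarith
    choose y hyB hy1 hy2 hyε using fun n => hcon (e n) (hepos n)
    -- weak-star compactness setup
    set J := NormedSpace.inclusionInDoubleDual ℝ X with hJ
    set M : ℝ := ‖x‖ + 2*d + 1 with hM
    have hyM : ∀ n, ‖y n‖ ≤ M := by
      intro n
      have h1 := hy1 n
      have h2 : ‖y n‖ - ‖x - h‖ ≤ ‖y n - (x - h)‖ := norm_sub_norm_le _ _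
      have h3 : ‖x - h‖ ≤ ‖x‖ + ‖h‖ := norm_sub_le _ _
      have h4 : e n ≤ 1 := (he1 n).trans (by
        rw [inv_le_one_iff₀]
        right
        linarith [Nat.cast_nonneg (α := ℝ) n])
      rw [hM]
      rw [hhd] at h3
      linarith
    set K := WeakDual.toStrongDual ⁻¹'
        closedBall (0 : StrongDual ℝ (StrongDual ℝ X)) M with hK
    have hKc : IsCompact K := by
      rw [hK]
      exact WeakDual.isCompact_closedBall (𝕜 := ℝ) 0 M
    have hmemK : ∀ n, auxPsi X (y n) ∈ K := by
      intro n
      rw [hK, Set.mem_preimage, mem_closedBall, dist_zero_right (WeakDual.toStrongDual (auxPsi X (y n)) : StrongDual ℝ (StrongDual ℝ X)), auxPsi_norm]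
      exact hyM n
    -- the nested weak-star closed sets
    set Cl : ℝ → Set (WeakDual ℝ (StrongDual ℝ X)) := fun r =>
      (auxPsi X '' B) ∩
        (WeakDual.toStrongDual ⁻¹' closedBall (J (x - h)) (d + r)) ∩
        (WeakDual.toStrongDual ⁻¹' closedBall (J (x + h)) (d + r)) with hCldef
    have hClclosed : ∀ r, IsClosed (Cl r) :=
      fun r => ((aux_isClosed_image hrefl hBclosed hBconv).inter
        (WeakDual.isClosed_closedBall _ _)).inter (WeakDual.isClosed_closedBall _ _)
    have hmemCl : ∀ z : X, ∀ r : ℝ, ‖z - (x - h)‖ ≤ d + r → ‖z - (x + h)‖ ≤ d + r →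
        (auxPsi X z ∈ WeakDual.toStrongDual ⁻¹' closedBall (J (x - h)) (d + r) ∧
         auxPsi X z ∈ WeakDual.toStrongDual ⁻¹' closedBall (J (x + h)) (d + r)) := by
      intro z r hz1 hz2
      constructor <;>
      · rw [Set.mem_preimage, mem_closedBall, dist_eq_norm (WeakDual.toStrongDual (auxPsi X z) : StrongDual ℝ (StrongDual ℝ X)), auxPsi_toNormed, hJ, ← map_sub (NormedSpace.inclusionInDoubleDual ℝ X) z,
          aux_J_norm]
        assumption
    have hrev : ∀ z : X, ∀ r : ℝ,
        auxPsi X z ∈ WeakDual.toStrongDual ⁻¹' closedBall (J (x - h)) (d + r) →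
        auxPsi X z ∈ WeakDual.toStrongDual ⁻¹' closedBall (J (x + h)) (d + r) →
        ‖z - (x - h)‖ ≤ d + r ∧ ‖z - (x + h)‖ ≤ d + r := by
      intro z r hz1 hz2
      rw [Set.mem_preimage, mem_closedBall, dist_eq_norm (WeakDual.toStrongDual (auxPsi X z) : StrongDual ℝ (StrongDual ℝ X)), auxPsi_toNormed, hJ, ← map_sub (NormedSpace.inclusionInDoubleDual ℝ X) z,
        aux_J_norm] at hz1 hz2
      exact ⟨hz1, hz2⟩
    -- unique cluster point
    have huniq : ∀ φ, ClusterPt φ (Filter.map (fun n => auxPsi X (y n)) atTop) →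
        φ = auxPsi X x := by
      intro φ hφ
      have hφCl : ∀ n : ℕ, φ ∈ Cl (e n) := by
        intro n
        have htail : (fun m => auxPsi X (y m)) '' Set.Ici n ∈
            Filter.map (fun m => auxPsi X (y m)) atTop :=
          Filter.image_mem_map (Filter.Ici_mem_atTop n)
        have hsub : (fun m => auxPsi X (y m)) '' Set.Ici n ⊆ Cl (e n) := by
          rintro _ ⟨m, hm, rfl⟩
          have hmn := hanti m n hm
          have h1 : ‖y m - (x - h)‖ ≤ d + e n := (hy1 m).trans (by linarith)
          have h2 : ‖y m - (x + h)‖ ≤ d + e n := (hy2 m).trans (by linarith)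
          obtain ⟨hb1, hb2⟩ := hmemCl (y m) (e n) h1 h2
          exact ⟨⟨⟨y m, hyB m, rfl⟩, hb1⟩, hb2⟩
        have hclos : φ ∈ closure ((fun m => auxPsi X (y m)) '' Set.Ici n) := by
          rw [mem_closure_iff_clusterPt]
          exact hφ.mono (Filter.le_principal_iff.mpr htail)
        exact closure_minimal hsub (hClclosed (e n)) hclos
      obtain ⟨⟨⟨z, hzB, hz⟩, _⟩, _⟩ := hφCl 0
      have hzb : ∀ n : ℕ, ‖z - (x - h)‖ ≤ d + e n ∧ ‖z - (x + h)‖ ≤ d + e n := by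
        intro n
        obtain ⟨⟨_, hb1⟩, hb2⟩ := hφCl n
        rw [← hz] at hb1 hb2
        exact hrev z (e n) hb1 hb2
      have hzd : ‖z - (x - h)‖ ≤ d ∧ ‖z - (x + h)‖ ≤ d := by
        constructor <;>
        · refine le_of_forall_pos_le_add fun η hη => ?_
          obtain ⟨n, hn⟩ := exists_nat_one_div_lt hη
          have h5 : e n ≤ η := ((he1 n).trans (by rw [← one_div]; exact hn.le))
          first
            | linarith [(hzb n).1]
            | linarith [(hzb n).2]
      have hzx : z = x := aux_strict_eq hhd hzd.1 hzd.2
      rw [← hz, hzx]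
    have htends : Tendsto (fun n => auxPsi X (y n)) atTop (nhds (auxPsi X x)) :=
      aux_tendsto_of_unique hKc hmemK huniq
    -- weak convergence of `y` to `x`
    have hyweak : ∀ f : StrongDual ℝ X,
        Tendsto (fun n => f (y n)) atTop (nhds (f x)) := by
      intro f
      have hcomp := ((WeakDual.eval_continuous f).tendsto (auxPsi X x)).comp htends
      exact hcomp
    -- the shifted sequence `u`
    set u : ℕ → X := fun n => y n - (x - h) with hu
    have huub : ∀ n, ‖u n‖ ≤ d + e n := fun n => hy1 n
    have hulb : ∀ n, d - e n ≤ ‖u n‖ := by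
      intro n
      have hw : ‖x + h - y n‖ ≤ d + e n := by
        rw [← norm_neg]; simpa [neg_sub] using hy2 n
      have hsum : u n + (x + h - y n) = h + h := by rw [hu]; beta_reduce; abel
      have h2d : ‖u n + (x + h - y n)‖ = d + d := by
        rw [hsum]
        calc ‖h + h‖ = ‖(2:ℝ) • h‖ := by rw [two_smul]
        _ = 2 * ‖h‖ := by rw [norm_smul]; norm_num
        _ = d + d := by rw [hhd]; ring
      have htri := norm_add_le (u n) (x + h - y n)
      linarith
    have hupos : ∀ n, 0 < ‖u n‖ := by
      intro n
      have := hed n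
      have := hulb n
      linarith
    have hunorm : Tendsto (fun n => ‖u n‖) atTop (nhds d) := by
      have hlo : Tendsto (fun n => d - e n) atTop (nhds d) := by
        simpa using tendsto_const_nhds.sub he0
      have hhi : Tendsto (fun n => d + e n) atTop (nhds d) := by
        simpa using tendsto_const_nhds.add he0
      exact tendsto_of_tendsto_of_tendsto_of_le_of_le hlo hhi hulb huub
    set v : ℕ → X := fun n => ‖u n‖⁻¹ • u n with hv
    have hv1 : ∀ n, ‖v n‖ = 1 := by
      intro n
      rw [hv]
      simp only [norm_smul, norm_inv, norm_norm]
      exact inv_mul_cancel₀ (ne_of_gt (hupos n))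
    have hweakv : WeakTendsto v (d⁻¹ • h) := by
      intro f
      have hfu : Tendsto (fun n => f (u n)) atTop (nhds (f h)) := by
        have heq : (fun n => f (u n)) = fun n => f (y n) - f (x - h) := by
          funext n
          rw [hu]
          simp [map_sub]
        rw [heq]
        have hlim := (hyweak f).sub (tendsto_const_nhds (x := f (x - h)))
        have : f x - f (x - h) = f h := by
          rw [← map_sub]
          congr 1
          abel
        rwa [this] at hlim
      have hinv : Tendsto (fun n => ‖u n‖⁻¹) atTop (nhds d⁻¹) :=
        hunorm.inv₀ (ne_of_gt hdpos)
      have hmul := hinv.mul hfu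
      have hgoal : (fun n => f (v n)) = fun n => ‖u n‖⁻¹ * f (u n) := by
        funext n
        rw [hv]
        simp [map_smul, smul_eq_mul]
      rw [hgoal]
      have : f (d⁻¹ • h) = d⁻¹ * f h := by simp [map_smul, smul_eq_mul]
      rwa [this]
    have hnormv : Tendsto v atTop (nhds (d⁻¹ • h)) := (hH v (d⁻¹ • h) hv1).mp hweakv
    have hutend : Tendsto u atTop (nhds h) := by
      have h1 : Tendsto (fun n => ‖u n‖ • v n) atTop (nhds (d • (d⁻¹ • h))) :=
        hunorm.smul hnormv
      have h2 : (fun n => ‖u n‖ • v n) = u := by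
        funext n
        rw [hv]
        exact smul_inv_smul₀ (ne_of_gt (hupos n)) _
      have h3 : d • (d⁻¹ • h) = h := by
        rw [smul_smul, mul_inv_cancel₀ (ne_of_gt hdpos), one_smul]
      rwa [h2, h3] at h1
    have hytend : Tendsto y atTop (nhds x) := by
      have h1 : Tendsto (fun n => u n + (x - h)) atTop (nhds (h + (x - h))) :=
        hutend.add tendsto_const_nhds
      have h2 : (fun n => u n + (x - h)) = y := by
        funext n
        show y n - (x - h) + (x - h) = y n
        abel
      have h3 : h + (x - h) = x := by abel
      rwa [h2, h3] at h1
    obtain ⟨N, hN⟩ := Metric.tendsto_atTop.mp hytend ε hε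
    have := hN N le_rfl
    rw [dist_eq_norm] at this
    exact absurd this (not_lt.mpr (hyε N).le)

end AuxLemmas

theorem d1_balls_inside_norm_balls {X : Type*} [NormedAddCommGroup X]
    [NormedSpace ℝ X] [CompleteSpace X] [StrictConvexSpace ℝ X]
    (hrefl : ReflexiveSpace X) (hH : PropertyH X)
    (A B : Set X) (h : X) (hpar : ProximinalParallel A B h)
    (C : Set X) (hC : C = (fun a => a + h + h) '' A)
    (hBne : B.Nonempty) (hBclosed : IsClosed B) (hBconv : Convex ℝ B)
    (d : ℝ) (hd : d = setDist A B) :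
    ∀ x ∈ B, ∃ f : ℝ → ℝ, (∀ r > (0 : ℝ), 0 < f r) ∧
      Tendsto f (nhdsWithin 0 (Set.Ioi 0)) (nhds 0) ∧
      ∀ r > (0 : ℝ), {y ∈ B | semiD1 h d x y ≤ r} ⊆ Metric.closedBall x (f r) := by
  intro x hx
  have hhd : ‖h‖ = d := by rw [hd]; exact hpar.2.2
  have hd0 : 0 ≤ d := hhd ▸ norm_nonneg h
  -- the sets S r and the sup function g
  set S : ℝ → Set X := fun r => {y ∈ B | ‖y - (x - h)‖ ≤ d + r ∧ ‖y - (x + h)‖ ≤ d + r}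
    with hS
  set g : ℝ → ℝ := fun r => sSup ((fun y => ‖y - x‖) '' S r) with hg
  have hxS : ∀ r, 0 ≤ r → x ∈ S r := by
    intro r hr
    refine ⟨hx, ?_, ?_⟩
    · rw [sub_sub_cancel, hhd]; linarith
    · rw [show x - (x + h) = -h by abel, norm_neg, hhd]; linarith
  have hbdd : ∀ r, BddAbove ((fun y => ‖y - x‖) '' S r) := by
    intro r
    refine ⟨2*d + r, ?_⟩
    rintro _ ⟨y, hy, rfl⟩
    have h1 := hy.2.1
    have h2 : ‖y - x‖ ≤ ‖y - (x - h)‖ + ‖h‖ := by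
      rw [show y - x = (y - (x - h)) + -h by abel]
      exact (norm_add_le _ _).trans (by rw [norm_neg])
    rw [hhd] at h2
    linarith
  have hgnn : ∀ r, 0 ≤ r → 0 ≤ g r := by
    intro r hr
    have hmem : (0:ℝ) ∈ (fun y => ‖y - x‖) '' S r := ⟨x, hxS r hr, by simp⟩
    exact (le_csSup (hbdd r) hmem)
  have hgle : ∀ r ε, 0 ≤ ε → (∀ y ∈ S r, ‖y - x‖ ≤ ε) → g r ≤ ε := by
    intro r ε hε hy
    apply Real.sSup_le _ hε
    rintro _ ⟨y, hyS, rfl⟩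
    exact hy y hyS
  refine ⟨fun r => g r + r, ?_, ?_, ?_⟩
  · intro r hr
    show 0 < g r + r
    have := hgnn r hr.le
    linarith
  · rw [Metric.tendsto_nhdsWithin_nhds]
    intro ε hε
    obtain ⟨δ₀, hδ₀, hδ₀p⟩ := aux_core hrefl hH hBclosed hBconv hhd
      (x := x) (ε := ε/4) (by linarith)
    refine ⟨min δ₀ (ε/2), lt_min hδ₀ (by linarith), ?_⟩
    intro r hr hrd
    rw [Real.dist_eq, sub_zero] at hrd
    have hr0 : 0 < r := hr
    have hrabs : r < min δ₀ (ε/2) := by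
      rwa [abs_of_pos hr0] at hrd
    have hrδ : r ≤ δ₀ := le_of_lt (lt_of_lt_of_le hrabs (min_le_left _ _))
    have hgr : g r ≤ ε/4 := by
      refine hgle r (ε/4) (by linarith) ?_
      intro y hyS
      exact hδ₀p y hyS.1 (hyS.2.1.trans (by linarith)) (hyS.2.2.trans (by linarith))
    rw [Real.dist_eq, sub_zero]
    have hfr : 0 < g r + r := by
      have := hgnn r hr0.le
      linarith
    rw [abs_of_pos hfr]
    have : r < ε/2 := lt_of_lt_of_le hrabs (min_le_right _ _)
    linarith
  · intro r hr y hy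
    obtain ⟨hyB, hyd⟩ := hy
    obtain ⟨h1, h2⟩ := aux_semiD1_le (h := h) (x := x) (y := y) (d := d) hyd
    have hyS : y ∈ S r := ⟨hyB, h1, h2⟩
    have : ‖y - x‖ ≤ g r := le_csSup (hbdd r) ⟨y, hyS, rfl⟩
    rw [mem_closedBall, dist_eq_norm]
    show ‖y - x‖ ≤ g r + r
    linarith
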